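/- Let (M,d) be the generalized metric space of a Finsler manifold. If a sequence of finite Busemann functions {f_n} ⊂ B^+(M) converges pointwise to a function f ∈ B^+(M), then f is the unique limit of {f_n} in the chronological topology on B^+(M); in particular, f ∈ L̂({f_n}) for every subsequence, where L̂ is the chronological limit operator. -/

import Mathlib

open Filter Topology

/-- A generalized metric space: `d` is nonnegative, separates points symmetrically,
satisfies the triangle inequality, and convergence `d (xₙ, x) → 0` is equivalent
to `d (x, xₙ) → 0` (axiom (a4)). -/
structure GenMetric (M : Type*) where
  d : M → M → ℝ
  d_nonneg : ∀ x y, 0 ≤ d x y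
  d_eq_zero_iff : ∀ x y, (d x y = 0 ∧ d y x = 0) ↔ x = y
  d_triangle : ∀ x y z, d x z ≤ d x y + d y z
  symm_conv : ∀ (x : M) (u : ℕ → M),
    Tendsto (fun n => d (u n) x) atTop (𝓝 0) ↔ Tendsto (fun n => d x (u n)) atTop (𝓝 0)

/-- A forward Cauchy sequence for a (possibly non-symmetric) distance. -/
def ForwardCauchy {M : Type*} (d : M → M → ℝ) (u : ℕ → M) : Prop :=
  ∀ ε > (0 : ℝ), ∃ n₀ : ℕ, ∀ n m : ℕ, n₀ ≤ n → n ≤ m → d (u n) (u m) < ε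

/-- The filter of parameters `s ∈ [α, Ω)` approaching `Ω ∈ (-∞, +∞]`. -/
noncomputable def endFilter (α : ℝ) (Ω : EReal) : Filter ℝ :=
  Filter.comap (fun s : ℝ => (s : EReal)) (𝓝[<] Ω) ⊓ Filter.principal (Set.Ici α)

/-- `f` is a finite-valued Busemann function of `(M,d)`: there is a curve
`c : [α,Ω) → M` with `F(ċ) < 1` (encoded by `d (c s₁, c s₂) < s₂ - s₁`) such that
`f x = lim_{s→Ω} (s - d (x, c s))` (in particular the limit is finite). -/
def IsBusemann {M : Type*} (d : M → M → ℝ) (f : M → ℝ) : Prop :=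
  ∃ (α : ℝ) (Ω : EReal) (c : ℝ → M), (α : EReal) < Ω ∧
    (∀ s₁ s₂ : ℝ, α ≤ s₁ → s₁ < s₂ → (s₂ : EReal) < Ω → d (c s₁) (c s₂) < s₂ - s₁) ∧
    ∀ x : M, Tendsto (fun s : ℝ => s - d x (c s)) (endFilter α Ω) (𝓝 (f x))

/-- The space `B^+(M)` of finite Busemann functions. -/
abbrev BusemannSpace {M : Type*} (d : M → M → ℝ) : Type _ :=
  {f : M → ℝ // IsBusemann d f}

/-- The chronological limit operator `L̂` on `B^+(M)`: `g ∈ L̂({fₙ})` iff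
(a) `g ≤ liminf fₙ` pointwise and (b) `g` is maximal in `B^+(M)` among functions
`h` with `g ≤ h ≤ limsup fₙ`. -/
def Lhat {M : Type*} (d : M → M → ℝ) (F : ℕ → BusemannSpace d) :
    Set (BusemannSpace d) :=
  {g | (∀ x : M, ((g : M → ℝ) x : EReal) ≤
          Filter.liminf (fun n => (((F n : M → ℝ) x : ℝ) : EReal)) atTop) ∧
    ∀ h : BusemannSpace d, (∀ x, (g : M → ℝ) x ≤ (h : M → ℝ) x) →
      (∀ x : M, (((h : M → ℝ) x : ℝ) : EReal) ≤
          Filter.limsup (fun n => (((F n : M → ℝ) x : ℝ) : EReal)) atTop) → h = g}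

/-- A set is `L̂`-closed if it is stable under chronological limits of its sequences. -/
def LClosed {M : Type*} (d : M → M → ℝ) (C : Set (BusemannSpace d)) : Prop :=
  ∀ F : ℕ → BusemannSpace d, (∀ n, F n ∈ C) → Lhat d F ⊆ C

/-- The chronological topology on `B^+(M)`: the topology whose closed sets are
exactly the `L̂`-closed sets (generated by their complements). -/
def chronTopology {M : Type*} (d : M → M → ℝ) : TopologicalSpace (BusemannSpace d) :=
  TopologicalSpace.generateFrom {U | LClosed d Uᶜ}

namespace ChronAux

variable {M : Type*} {d : M → M → ℝ}

lemma liminf_coe_eq {u : ℕ → ℝ} {a : ℝ} (h : Tendsto u atTop (𝓝 a)) :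
    Filter.liminf (fun n => ((u n : ℝ) : EReal)) atTop = (a : EReal) :=
  Filter.Tendsto.liminf_eq ((continuous_coe_real_ereal.tendsto a).comp h)

lemma limsup_coe_eq {u : ℕ → ℝ} {a : ℝ} (h : Tendsto u atTop (𝓝 a)) :
    Filter.limsup (fun n => ((u n : ℝ) : EReal)) atTop = (a : EReal) :=
  Filter.Tendsto.limsup_eq ((continuous_coe_real_ereal.tendsto a).comp h)

/-- If `K` converges pointwise to `g`, then `g ∈ L̂(K)`. -/
lemma mem_Lhat_of_ptwise (K : ℕ → BusemannSpace d) (g : BusemannSpace d)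
    (h : ∀ x, Tendsto (fun n => (K n : M → ℝ) x) atTop (𝓝 ((g : M → ℝ) x))) :
    g ∈ Lhat d K := by
  constructor
  · intro x
    rw [liminf_coe_eq (h x)]
  · intro p hgp hple
    apply Subtype.ext; funext x
    have h1 : ((p : M → ℝ) x : EReal) ≤ (((g : M → ℝ) x : ℝ) : EReal) := by
      have := hple x
      rwa [limsup_coe_eq (h x)] at this
    exact le_antisymm (by exact_mod_cast h1) (hgp x)

/-- If `K` converges pointwise to `g`, then every element of `L̂(K)` equals `g`. -/
lemma eq_of_mem_Lhat (K : ℕ → BusemannSpace d) (g : BusemannSpace d)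
    (h : ∀ x, Tendsto (fun n => (K n : M → ℝ) x) atTop (𝓝 ((g : M → ℝ) x)))
    {k : BusemannSpace d} (hk : k ∈ Lhat d K) : k = g := by
  have hkg : ∀ x, (k : M → ℝ) x ≤ (g : M → ℝ) x := by
    intro x
    have := hk.1 x
    rw [liminf_coe_eq (h x)] at this
    exact_mod_cast this
  have hle : ∀ x : M, (((g : M → ℝ) x : ℝ) : EReal) ≤
      Filter.limsup (fun n => (((K n : M → ℝ) x : ℝ) : EReal)) atTop := by
    intro x; rw [limsup_coe_eq (h x)]
  exact (hk.2 g hkg hle).symm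

/-- The tail set `{g} ∪ {F n : n ≥ N}` is `L̂`-closed. -/
lemma closed_tail (F : ℕ → BusemannSpace d) (g : BusemannSpace d)
    (hconv : ∀ x : M, Tendsto (fun n => (F n : M → ℝ) x) atTop (𝓝 ((g : M → ℝ) x)))
    (N : ℕ) :
    LClosed d {b | b = g ∨ ∃ n, N ≤ n ∧ b = F n} := by
  intro H hH k hk
  by_cases hcase : ∃ b : BusemannSpace d, {j | H j = b}.Infinite
  · -- some value `b` occurs infinitely often; then `k = b`.
    obtain ⟨b, hb⟩ := hcase
    have hbC : b ∈ {b | b = g ∨ ∃ n, N ≤ n ∧ b = F n} := by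
      obtain ⟨j, hj⟩ := hb.nonempty
      exact hj ▸ hH j
    have hfreq : ∃ᶠ j in atTop, H j = b := Nat.frequently_atTop_iff_infinite.mpr hb
    have h1 : ∀ x : M, Filter.liminf (fun j => (((H j : M → ℝ) x : ℝ) : EReal)) atTop
        ≤ (((b : M → ℝ) x : ℝ) : EReal) := by
      intro x
      exact Filter.liminf_le_of_frequently_le' (hfreq.mono fun j hj => by rw [hj])
    have h2 : ∀ x : M, (((b : M → ℝ) x : ℝ) : EReal) ≤
        Filter.limsup (fun j => (((H j : M → ℝ) x : ℝ) : EReal)) atTop := by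
      intro x
      exact Filter.le_limsup_of_frequently_le' (hfreq.mono fun j hj => by rw [hj])
    have hkb : ∀ x, (k : M → ℝ) x ≤ (b : M → ℝ) x := by
      intro x
      have := (hk.1 x).trans (h1 x)
      exact_mod_cast this
    have hbk : b = k := hk.2 b hkb h2
    exact hbk ▸ hbC
  · -- every value occurs finitely often; then `H` converges pointwise to `g`.
    push_neg at hcase
    have hfin : ∀ b : BusemannSpace d, {j | H j = b}.Finite :=
      fun b => hcase b
    have hpt : ∀ x, Tendsto (fun j => (H j : M → ℝ) x) atTop (𝓝 ((g : M → ℝ) x)) := by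
      intro x
      rw [Metric.tendsto_atTop]
      intro ε hε
      obtain ⟨Mn, hMn⟩ := Metric.tendsto_atTop.mp (hconv x) ε hε
      have hS : (⋃ n ∈ Finset.range Mn, {j | H j = F n}).Finite :=
        Set.Finite.biUnion (Finset.range Mn).finite_toSet (fun n _ => hfin (F n))
      obtain ⟨J, hJ⟩ := hS.bddAbove
      refine ⟨J + 1, fun j hj => ?_⟩
      have hjS : j ∉ ⋃ n ∈ Finset.range Mn, {j | H j = F n} := by
        intro hmem
        have := hJ hmem
        omega
      rcases hH j with hg | ⟨n, hnN, hn⟩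
      · rw [hg]; simpa using hε
      · have hnM : Mn ≤ n := by
          by_contra hlt
          exact hjS (Set.mem_biUnion (Finset.mem_range.mpr (lt_of_not_ge hlt)) hn)
        rw [hn]; exact hMn n hnM
    exact Or.inl (eq_of_mem_Lhat H g hpt hk)

/-- Convergence in the chronological topology, unfolded. -/
lemma tendsto_chron_iff {F : ℕ → BusemannSpace d} {g : BusemannSpace d} :
    Tendsto F atTop (@nhds _ (chronTopology d) g) ↔
      ∀ U : Set (BusemannSpace d), LClosed d Uᶜ → g ∈ U → ∀ᶠ n in atTop, F n ∈ U := by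
  have hn : @nhds _ (chronTopology d) g
      = ⨅ s ∈ { s | g ∈ s ∧ s ∈ {U : Set (BusemannSpace d) | LClosed d Uᶜ} }, 𝓟 s :=
    TopologicalSpace.nhds_generateFrom
  rw [hn]
  constructor
  · intro h U hU hgU
    have : Tendsto F atTop (𝓟 U) :=
      h.mono_right (iInf_le_of_le U (iInf_le_of_le ⟨hgU, hU⟩ le_rfl))
    exact tendsto_principal.mp this
  · intro h
    refine tendsto_iInf.mpr fun U => tendsto_iInf.mpr fun hU => tendsto_principal.mpr ?_
    exact h U hU.2 hU.1

end ChronAux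

/-- If a sequence of finite Busemann functions converges pointwise to a finite
Busemann function `g`, then `g ∈ L̂` of every subsequence and `g` is the unique
limit of the sequence in the chronological topology. -/
theorem pointwise_limit_unique_chron_limit {M : Type*} (G : GenMetric M)
    (F : ℕ → BusemannSpace G.d) (g : BusemannSpace G.d)
    (hconv : ∀ x : M, Tendsto (fun n => (F n : M → ℝ) x) atTop (𝓝 ((g : M → ℝ) x))) :
    (∀ φ : ℕ → ℕ, StrictMono φ → g ∈ Lhat G.d (F ∘ φ)) ∧
    Tendsto F atTop (@nhds _ (chronTopology G.d) g) ∧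
    (∀ g' : BusemannSpace G.d,
      Tendsto F atTop (@nhds _ (chronTopology G.d) g') → g' = g) := by
  have part1 : ∀ φ : ℕ → ℕ, StrictMono φ → g ∈ Lhat G.d (F ∘ φ) := by
    intro φ hφ
    exact ChronAux.mem_Lhat_of_ptwise (F ∘ φ) g
      (fun x => (hconv x).comp hφ.tendsto_atTop)
  refine ⟨part1, ?_, ?_⟩
  · rw [ChronAux.tendsto_chron_iff]
    intro U hU hgU
    by_contra hnot
    have hfreq : ∃ᶠ n in atTop, F n ∈ Uᶜ := Filter.not_eventually.mp hnot
    obtain ⟨φ, hφ, hmem⟩ := Filter.extraction_of_frequently_atTop hfreq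
    exact hU (F ∘ φ) hmem (part1 φ hφ) hgU
  · intro g' hg'
    have key : ∀ N : ℕ, g' = g ∨ ∃ n, N ≤ n ∧ g' = F n := by
      intro N
      by_contra hnot
      have hclosed : LClosed G.d ({b | b = g ∨ ∃ n, N ≤ n ∧ b = F n}ᶜ)ᶜ := by
        rw [compl_compl]
        exact ChronAux.closed_tail F g hconv N
      have hgU : g' ∈ {b : BusemannSpace G.d | b = g ∨ ∃ n, N ≤ n ∧ b = F n}ᶜ := hnot
      have hev : ∀ᶠ n in atTop,
          F n ∈ {b : BusemannSpace G.d | b = g ∨ ∃ n, N ≤ n ∧ b = F n}ᶜ :=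
        (ChronAux.tendsto_chron_iff.mp hg') _ hclosed hgU
      obtain ⟨n, hn1, hn2⟩ := (hev.and (eventually_ge_atTop N)).exists
      exact hn1 (Or.inr ⟨n, hn2, rfl⟩)
    by_cases hg : g' = g
    · exact hg
    · have hfreq : ∀ N : ℕ, ∃ n, N ≤ n ∧ g' = F n := by
        intro N
        rcases key N with h | h
        · exact absurd h hg
        · exact h
      apply Subtype.ext; funext x
      by_contra hne
      have hd : 0 < dist ((g' : M → ℝ) x) ((g : M → ℝ) x) := dist_pos.mpr hne
      obtain ⟨Mn, hMn⟩ := Metric.tendsto_atTop.mp (hconv x) _ hd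
      obtain ⟨n, hn, he⟩ := hfreq Mn
      have hlt := hMn n hn
      rw [← he] at hlt
      exact lt_irrefl _ hlt
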